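/- arXiv:1805.10932 — 2 statements merged into one kernel-verified Lean document; each statement's English description precedes it below -/
import Mathlib

section
/- Let μ be a finite nonzero Borel measure on ℂ whose support is contained in a compact set I of diameter d > 0, let ξ₀ ∈ I, and let q ≥ 1 be an integer. Then there exist complex numbers r₁, …, r_q with |r_l| ≤ 2 q d for every l, such that for every u = 1, …, q: ∑_{l=1}^q r_l^u = (q / μ(I)) ∫_I (ξ − ξ₀)^u dμ(ξ). -/
open MeasureTheory Finset


noncomputable def newtonE (p : ℕ → ℂ) : ℕ → ℂ
  | 0 => 1
  | (k+1) => ((-1:ℂ)^k / (k+1)) *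
      ∑ a ∈ (Finset.range (k+1)).attach, (-1:ℂ)^(a:ℕ) * newtonE p a * p (k+1-a)
  decreasing_by exact Finset.mem_range.mp a.2

lemma newtonE_zero (p : ℕ → ℂ) : newtonE p 0 = 1 := by rw [newtonE]

lemma newtonE_rec (p : ℕ → ℂ) (k : ℕ) (hk : 1 ≤ k) :
    (k : ℂ) * newtonE p k =
      (-1:ℂ)^(k+1) * ∑ a ∈ Finset.range k, (-1:ℂ)^a * newtonE p a * p (k-a) := by
  obtain ⟨m, rfl⟩ := Nat.exists_eq_add_of_le hk
  rw [add_comm 1 m]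
  show ((m+1 : ℕ) : ℂ) * newtonE p (m+1) = _
  rw [newtonE]
  rw [Finset.sum_attach (Finset.range (m+1)) (fun a => (-1:ℂ)^a * newtonE p a * p (m+1-a))]
  have h1 : ((m+1 : ℕ) : ℂ) ≠ 0 := by exact_mod_cast Nat.succ_ne_zero m
  have h2 : ((-1:ℂ))^(m+1+1) = (-1)^m := by
    rw [pow_succ, pow_succ]; ring
  rw [h2]
  push_cast
  field_simp

lemma newtonE_bound (p : ℕ → ℂ) (q : ℕ) (hq : 1 ≤ q) (d : ℝ) (hd0 : 0 < d)
    (hp : ∀ u, 1 ≤ u → u ≤ q → ‖p u‖ ≤ q * d ^ u) :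
    ∀ k, k ≤ q → ‖newtonE p k‖ ≤ (q * d) ^ k := by
  have habs_neg : ‖(-1:ℂ)‖ = 1 := by simp
  intro k
  induction k using Nat.strong_induction_on with
  | _ k ih =>
    intro hkq
    rcases Nat.eq_zero_or_pos k with rfl | hk1
    · simp [newtonE_zero]
    · have hrec := newtonE_rec p k hk1
      have habs : ‖(k:ℂ) * newtonE p k‖ ≤
          ∑ a ∈ Finset.range k, (q*d)^a * ((q:ℝ) * d^(k-a)) := by
        rw [hrec, norm_mul, norm_pow, habs_neg, one_pow, one_mul]
        refine le_trans (norm_sum_le _ _) (Finset.sum_le_sum ?_)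
        intro a ha
        rw [Finset.mem_range] at ha
        rw [norm_mul, norm_mul, norm_pow, habs_neg, one_pow, one_mul]
        have h1 : ‖newtonE p a‖ ≤ (q*d)^a := ih a ha (le_trans (le_of_lt ha) hkq)
        have h2 : ‖p (k-a)‖ ≤ q * d^(k-a) :=
          hp (k-a) (by omega) (by omega)
        exact mul_le_mul h1 h2 (norm_nonneg _) (by positivity)
      have hsum : ∑ a ∈ Finset.range k, (q*d)^a * ((q:ℝ) * d^(k-a)) ≤ k * (q*d)^k := by
        have hterm : ∀ a ∈ Finset.range k, (q*d)^a * ((q:ℝ) * d^(k-a)) ≤ (q*d)^k := by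
          intro a ha
          rw [Finset.mem_range] at ha
          have hda : d^a * d^(k-a) = d^k := by rw [← pow_add]; congr 1; omega
          have heq : (q*d)^a * ((q:ℝ) * d^(k-a)) = (q:ℝ)^(a+1) * d^k := by
            rw [pow_succ, ← hda, mul_pow]; ring
          rw [heq, mul_pow]
          refine mul_le_mul ?_ le_rfl (by positivity) (by positivity)
          exact pow_le_pow_right₀ (by exact_mod_cast hq) (by omega)
        calc ∑ a ∈ Finset.range k, (q*d)^a * ((q:ℝ) * d^(k-a))
            ≤ ∑ _a ∈ Finset.range k, (q*d)^k := Finset.sum_le_sum hterm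
          _ = k * (q*d)^k := by rw [Finset.sum_const, Finset.card_range, nsmul_eq_mul]
      rw [norm_mul, Complex.norm_natCast] at habs
      have hk0 : (0:ℝ) < k := by exact_mod_cast hk1
      exact (mul_le_mul_iff_right₀ hk0).mp (habs.trans hsum)

lemma sum_antidiag_filter (k : ℕ) (f : ℕ → ℕ → ℂ) :
    ∑ a ∈ (Finset.HasAntidiagonal.antidiagonal k).filter (fun a => a.1 < k), f a.1 a.2
      = ∑ a ∈ Finset.range k, f a (k - a) := by
  refine Finset.sum_bij' (fun a _ => a.1) (fun a _ => (a, k - a)) ?_ ?_ ?_ ?_ ?_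
  · intro a ha
    simp only [Finset.mem_filter, Finset.HasAntidiagonal.mem_antidiagonal] at ha
    exact Finset.mem_range.mpr ha.2
  · intro a ha
    rw [Finset.mem_range] at ha
    simp only [Finset.mem_filter, Finset.HasAntidiagonal.mem_antidiagonal]
    omega
  · intro a ha
    simp only [Finset.mem_filter, Finset.HasAntidiagonal.mem_antidiagonal] at ha
    ext <;> simp <;> omega
  · intro a ha; rfl
  · intro a ha
    simp only [Finset.mem_filter, Finset.HasAntidiagonal.mem_antidiagonal] at ha
    have : a.2 = k - a.1 := by omega
    rw [this]

lemma newton_numbers (n : ℕ) (r : Fin n → ℂ) (k : ℕ) :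
    (k:ℂ) * (Finset.univ.val.map r).esymm k =
      (-1:ℂ)^(k+1) * ∑ a ∈ Finset.range k,
        (-1:ℂ)^a * (Finset.univ.val.map r).esymm a * (∑ l, r l ^ (k-a)) := by
  have H := congrArg (MvPolynomial.aeval r) (MvPolynomial.mul_esymm_eq_sum (Fin n) ℂ k)
  have hpsum : ∀ m : ℕ, MvPolynomial.aeval r (MvPolynomial.psum (Fin n) ℂ m) = ∑ l, r l ^ m := by
    intro m; simp [MvPolynomial.psum]
  simp only [map_mul, map_sum, map_pow, map_natCast, map_neg, map_one,
    MvPolynomial.aeval_esymm_eq_multiset_esymm, hpsum] at H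
  rw [H, ← sum_antidiag_filter k
    (fun a b => (-1:ℂ)^a * (Finset.univ.val.map r).esymm a * (∑ l, r l ^ b))]

lemma half_pow_sum (q : ℕ) : ∑ i ∈ Finset.range q, ((1:ℝ)/2)^(i+1) = 1 - (1/2)^q := by
  induction q with
  | zero => simp
  | succ n ih => rw [Finset.sum_range_succ, ih, pow_succ]; ring

theorem exists_power_sums (q : ℕ) (hq : 1 ≤ q) (d : ℝ) (hd0 : 0 < d) (p : ℕ → ℂ)
    (hp : ∀ u, 1 ≤ u → u ≤ q → ‖p u‖ ≤ q * d ^ u) :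
    ∃ r : Fin q → ℂ, (∀ l, ‖r l‖ ≤ 2*q*d) ∧
      ∀ u, 1 ≤ u → u ≤ q → ∑ l, r l ^ u = p u := by
  set e := newtonE p with he
  set f : Polynomial ℂ :=
    Polynomial.X^q + ∑ k ∈ Finset.Icc 1 q, Polynomial.C ((-1:ℂ)^k * e k) * Polynomial.X^(q-k)
    with hf
  have hgdeg : (∑ k ∈ Finset.Icc 1 q,
      Polynomial.C ((-1:ℂ)^k * e k) * Polynomial.X^(q-k)).degree < (q : WithBot ℕ) := by
    apply lt_of_le_of_lt (Polynomial.degree_sum_le _ _)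
    rw [Finset.sup_lt_iff (by exact WithBot.bot_lt_coe q)]
    intro k hk
    rw [Finset.mem_Icc] at hk
    refine lt_of_le_of_lt (Polynomial.degree_C_mul_X_pow_le _ _) ?_
    exact_mod_cast (by omega : q - k < q)
  have hmonic : f.Monic := Polynomial.monic_X_pow_add hgdeg
  have hfdeg : f.degree = q := by
    rw [hf, Polynomial.degree_add_eq_left_of_degree_lt, Polynomial.degree_X_pow]
    rw [Polynomial.degree_X_pow]; exact hgdeg
  have hfnat : f.natDegree = q := Polynomial.natDegree_eq_of_degree_eq_some hfdeg
  have hsplits : f.Splits := IsAlgClosed.splits f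
  have hcard : Multiset.card f.roots = q := by
    rw [← hfnat]; exact (Polynomial.splits_iff_card_roots).mp hsplits
  set L := f.roots.toList with hL
  have hlen : L.length = q := by rw [hL, Multiset.length_toList, hcard]
  set r : Fin q → ℂ := fun l => L.get (Fin.cast hlen.symm l) with hr
  have hofn : List.ofFn r = L := by
    apply List.ext_getElem
    · simp [hlen]
    · intro i h1 h2
      simp [hr, List.getElem_ofFn]
  have hmap : Finset.univ.val.map r = f.roots := by
    rw [Fin.univ_val_map, hofn, hL, Multiset.coe_toList]
  have hfd : f = (f.roots.map fun a => Polynomial.X - Polynomial.C a).prod :=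
    hsplits.eq_prod_roots_of_monic hmonic
  -- coefficients of f
  have hcoeff2 : ∀ j, 1 ≤ j → j ≤ q → f.coeff (q - j) = (-1:ℂ)^j * e j := by
    intro j hj1 hjq
    rw [hf, Polynomial.coeff_add, Polynomial.coeff_X_pow, if_neg (by omega : ¬ (q - j = q)),
      Polynomial.finset_sum_coeff, Finset.sum_eq_single j]
    · rw [Polynomial.coeff_C_mul, Polynomial.coeff_X_pow, if_pos rfl, mul_one, zero_add]
    · intro k hk hkj
      rw [Finset.mem_Icc] at hk
      rw [Polynomial.coeff_C_mul, Polynomial.coeff_X_pow, if_neg (by omega), mul_zero]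
    · intro hj
      exact absurd (Finset.mem_Icc.mpr ⟨hj1, hjq⟩) hj
  have hesymm : ∀ j, 1 ≤ j → j ≤ q → f.roots.esymm j = e j := by
    intro j hj1 hjq
    have h1 : f.coeff (q - j) = (-1:ℂ)^j * f.roots.esymm j := by
      conv_lhs => rw [hfd]
      rw [Multiset.prod_X_sub_C_coeff f.roots (by rw [hcard]; omega)]
      rw [hcard, (by omega : q - (q - j) = j)]
    have h2 := (h1.symm.trans (hcoeff2 j hj1 hjq))
    exact mul_left_cancel₀ (by simp : ((-1:ℂ))^j ≠ 0) h2
  have hesymm0 : f.roots.esymm 0 = 1 := by simp [Multiset.esymm]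
  -- power sums match
  have hP : ∀ u, 1 ≤ u → u ≤ q → ∑ l, r l ^ u = p u := by
    intro u
    induction u using Nat.strong_induction_on with
    | _ u ih =>
      intro hu1 huq
      have h1 := newton_numbers q r u
      rw [hmap] at h1
      have h2 := newtonE_rec p u hu1
      have hsums : ∑ a ∈ Finset.range u, (-1:ℂ)^a * f.roots.esymm a * (∑ l, r l ^ (u-a))
          = ∑ a ∈ Finset.range u, (-1:ℂ)^a * e a * p (u-a) := by
        have key : ((-1:ℂ))^(u+1) * (∑ a ∈ Finset.range u,
            (-1:ℂ)^a * f.roots.esymm a * (∑ l, r l ^ (u-a)))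
            = ((-1:ℂ))^(u+1) * ∑ a ∈ Finset.range u, (-1:ℂ)^a * e a * p (u-a) := by
          rw [← h1]
          have : (u:ℂ) * f.roots.esymm u = (u:ℂ) * e u := by
            rw [hesymm u hu1 huq]
          rw [this, h2]
        exact mul_left_cancel₀ (by simp : ((-1:ℂ))^(u+1) ≠ 0) key
      obtain ⟨m, rfl⟩ : ∃ m, u = m + 1 := ⟨u - 1, by omega⟩
      rw [Finset.sum_range_succ', Finset.sum_range_succ'] at hsums
      have htail : ∑ i ∈ Finset.range m, (-1:ℂ)^(i+1) * f.roots.esymm (i+1) * (∑ l, r l ^ (m+1-(i+1)))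
          = ∑ i ∈ Finset.range m, (-1:ℂ)^(i+1) * e (i+1) * p (m+1-(i+1)) := by
        refine Finset.sum_congr rfl ?_
        intro i hi
        rw [Finset.mem_range] at hi
        rw [hesymm (i+1) (by omega) (by omega),
          ih (m+1-(i+1)) (by omega) (by omega) (by omega)]
      rw [htail] at hsums
      have h0 := add_left_cancel hsums
      simpa [hesymm0, he, newtonE_zero] using h0
  -- root bound
  have hroot : ∀ l, ‖r l‖ ≤ 2*q*d := by
    intro l
    have hmem : r l ∈ f.roots := by
      rw [← hmap]
      exact Multiset.mem_map_of_mem r (Finset.mem_val.mpr (Finset.mem_univ l))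
    have heval : f.eval (r l) = 0 := (Polynomial.isRoot_of_mem_roots hmem)
    set x := r l with hxdef
    have hx : x^q = -∑ k ∈ Finset.Icc 1 q, (-1:ℂ)^k * e k * x^(q-k) := by
      have h0 : x^q + ∑ k ∈ Finset.Icc 1 q, (-1:ℂ)^k * e k * x^(q-k) = 0 := by
        have := heval
        rw [hf] at this
        simpa [Polynomial.eval_finset_sum] using this
      linear_combination h0
    by_contra hgt
    push_neg at hgt
    set t := ‖x‖ with htdef
    have ht0 : (0:ℝ) < t := lt_trans (by positivity) hgt
    have hqd : (q:ℝ) * d < t / 2 := by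
      have : (0:ℝ) < 2 := by norm_num
      nlinarith
    have h1 : t^q ≤ ∑ k ∈ Finset.Icc 1 q, ((q:ℝ)*d)^k * t^(q-k) := by
      calc t^q = ‖x^q‖ := by rw [norm_pow]
        _ = ‖∑ k ∈ Finset.Icc 1 q, (-1:ℂ)^k * e k * x^(q-k)‖ := by
            rw [hx, norm_neg]
        _ ≤ ∑ k ∈ Finset.Icc 1 q, ‖(-1:ℂ)^k * e k * x^(q-k)‖ :=
            norm_sum_le _ _
        _ ≤ ∑ k ∈ Finset.Icc 1 q, ((q:ℝ)*d)^k * t^(q-k) := by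
            refine Finset.sum_le_sum ?_
            intro k hk
            rw [Finset.mem_Icc] at hk
            rw [norm_mul, norm_mul, norm_pow, norm_pow]
            have : ‖(-1:ℂ)‖ = 1 := by simp
            rw [this, one_pow, one_mul]
            refine mul_le_mul (newtonE_bound p q hq d hd0 ?_ k hk.2) le_rfl (by positivity)
              (by positivity)
            exact hp
    have h2 : ∑ k ∈ Finset.Icc 1 q, ((q:ℝ)*d)^k * t^(q-k) < t^q := by
      have hterm : ∀ k ∈ Finset.Icc 1 q, ((q:ℝ)*d)^k * t^(q-k) < (1/2)^k * t^q := by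
        intro k hk
        rw [Finset.mem_Icc] at hk
        have hlt : ((q:ℝ)*d)^k < (t/2)^k :=
          pow_lt_pow_left₀ hqd (by positivity) (by omega)
        calc ((q:ℝ)*d)^k * t^(q-k) < (t/2)^k * t^(q-k) :=
              mul_lt_mul_of_pos_right hlt (pow_pos ht0 _)
          _ = (1/2)^k * (t^k * t^(q-k)) := by rw [div_pow, one_div, inv_pow]; ring
          _ = (1/2)^k * t^q := by rw [← pow_add, (by omega : k + (q - k) = q)]
      calc ∑ k ∈ Finset.Icc 1 q, ((q:ℝ)*d)^k * t^(q-k)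
          < ∑ k ∈ Finset.Icc 1 q, (1/2)^k * t^q :=
            Finset.sum_lt_sum_of_nonempty (Finset.nonempty_Icc.mpr hq) hterm
        _ = (∑ k ∈ Finset.Icc 1 q, ((1:ℝ)/2)^k) * t^q := by rw [← Finset.sum_mul]
        _ ≤ 1 * t^q := by
            refine mul_le_mul_of_nonneg_right ?_ (by positivity)
            rw [← Finset.Ico_add_one_right_eq_Icc, Finset.sum_Ico_eq_sum_range]
            have : ∀ i ∈ Finset.range (q + 1 - 1), ((1:ℝ)/2)^(1+i) = (1/2)^(i+1) := by
              intro i _; rw [add_comm]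
            rw [Finset.sum_congr rfl this, (by omega : q + 1 - 1 = q), half_pow_sum]
            have : (0:ℝ) < (1/2)^q := by positivity
            linarith
        _ = t^q := one_mul _
    linarith
  exact ⟨r, hroot, hP⟩

/-- Given a finite nonzero Borel measure `μ` supported in a compact set `I` of
diameter `d > 0`, a base point `ξ₀ ∈ I` and an integer `q ≥ 1`, there are
complex numbers `r 1, …, r q` of modulus at most `2 q d` whose first `q` power
sums equal the normalized moments `(q / μ(I)) ∫_I (ξ − ξ₀)^u dμ(ξ)`. -/
theorem exists_points_matching_moments
    (μ : Measure ℂ) [IsFiniteMeasure μ] (hμ : μ ≠ 0)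
    (I : Set ℂ) (hI : IsCompact I) (hsupp : μ Iᶜ = 0)
    (hμI : 0 < μ I)
    (d : ℝ) (hd : d = Metric.diam I) (hd0 : 0 < d)
    (ξ₀ : ℂ) (hξ₀ : ξ₀ ∈ I) (q : ℕ) (hq : 1 ≤ q) :
    ∃ r : Fin q → ℂ,
      (∀ l, ‖r l‖ ≤ 2 * q * d) ∧
      ∀ u : ℕ, 1 ≤ u → u ≤ q →
        ∑ l, r l ^ u =
          ((q : ℂ) / ((μ I).toReal : ℂ)) * ∫ ξ in I, (ξ - ξ₀) ^ u ∂μ := by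
  set p : ℕ → ℂ := fun u => ((q : ℂ) / ((μ I).toReal : ℂ)) * ∫ ξ in I, (ξ - ξ₀) ^ u ∂μ with hpdef
  have hIr : 0 < (μ I).toReal := ENNReal.toReal_pos hμI.ne' (measure_ne_top μ I)
  have hp : ∀ u, 1 ≤ u → u ≤ q → ‖p u‖ ≤ q * d ^ u := by
    intro u hu1 huq
    have hint : ‖∫ ξ in I, (ξ - ξ₀) ^ u ∂μ‖ ≤ d ^ u * (μ I).toReal := by
      refine norm_setIntegral_le_of_norm_le_const_ae' (measure_lt_top μ I)
        (Filter.Eventually.of_forall ?_)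
      intro x hx
      rw [norm_pow]
      refine pow_le_pow_left₀ (norm_nonneg _) ?_ u
      rw [← dist_eq_norm, hd]
      exact Metric.dist_le_diam_of_mem hI.isBounded hx hξ₀
    have habs : ‖p u‖ =
        ((q : ℝ) / (μ I).toReal) * ‖∫ ξ in I, (ξ - ξ₀) ^ u ∂μ‖ := by
      rw [hpdef, norm_mul, norm_div, Complex.norm_natCast, Complex.norm_real, Real.norm_eq_abs,
        abs_of_nonneg hIr.le]
    rw [habs]
    calc ((q : ℝ) / (μ I).toReal) * ‖∫ ξ in I, (ξ - ξ₀) ^ u ∂μ‖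
        ≤ ((q : ℝ) / (μ I).toReal) * (d ^ u * (μ I).toReal) := by
          refine mul_le_mul_of_nonneg_left hint (by positivity)
      _ = q * d ^ u := by field_simp
  obtain ⟨r, hr1, hr2⟩ := exists_power_sums q hq d hd0 p hp
  exact ⟨r, hr1, hr2⟩
end

section
/- Let q ≥ 1 be an integer, d > 0, and let m̃₁, …, m̃_q ∈ ℂ satisfy |m̃_u| ≤ q d^u for u = 1, …, q. Suppose a₀, …, a_{q−1} ∈ ℂ satisfy Newton's identities m̃_u + a_{q−1} m̃_{u−1} + ⋯ + a_{q−u+1} m̃₁ = −u a_{q−u} for u = 1, …, q. Then |a_{q−u}| ≤ q^u d^u for every u = 1, …, q. -/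
open Finset

/-- Coefficient bounds from Newton's identities: if the "power sums"
`m̃ 1, …, m̃ q` satisfy `|m̃ u| ≤ q d^u` and the coefficients `a 0, …, a (q-1)`
satisfy Newton's identities
`m̃ u + a (q-1) m̃ (u-1) + ⋯ + a (q-u+1) m̃ 1 = -u a (q-u)` for `u = 1, …, q`,
then `|a (q-u)| ≤ q^u d^u` for every `u = 1, …, q`. -/
theorem newton_coefficient_bound
    (q : ℕ) (hq : 1 ≤ q) (d : ℝ) (hd : 0 < d)
    (mt : ℕ → ℂ) (a : ℕ → ℂ)
    (hmt : ∀ u : ℕ, 1 ≤ u → u ≤ q → ‖mt u‖ ≤ (q : ℝ) * d ^ u)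
    (hnewton : ∀ u : ℕ, 1 ≤ u → u ≤ q →
      mt u + ∑ i ∈ Finset.Icc 1 (u - 1), a (q - i) * mt (u - i)
        = -(u : ℂ) * a (q - u)) :
    ∀ u : ℕ, 1 ≤ u → u ≤ q →
      ‖a (q - u)‖ ≤ (q : ℝ) ^ u * d ^ u := by
  intro u
  induction u using Nat.strong_induction_on with
  | _ u ih =>
    intro hu1 huq
    have hu0 : (0:ℝ) < (u:ℝ) := by exact_mod_cast hu1
    have hq0 : (0:ℝ) ≤ (q:ℝ) := Nat.cast_nonneg q
    have h1 : (u:ℝ) * ‖a (q-u)‖ =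
        ‖mt u + ∑ i ∈ Icc 1 (u-1), a (q-i) * mt (u-i)‖ := by
      rw [hnewton u hu1 huq]
      simp [map_mul]
    -- bound each summand
    have hterm : ∀ i ∈ Icc 1 (u-1),
        ‖a (q-i) * mt (u-i)‖ ≤ (q:ℝ)^u * d^u := by
      intro i hi
      simp only [mem_Icc] at hi
      have hiu : i < u := lt_of_le_of_lt hi.2 (Nat.sub_lt (by omega) one_pos)
      have hiq : i ≤ q := le_trans (le_of_lt hiu) huq
      have h2 : 1 ≤ u - i := by omega
      have h3 : u - i ≤ q := by omega
      rw [norm_mul]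
      have ha := ih i hiu hi.1 hiq
      have hm := hmt (u-i) h2 h3
      calc ‖a (q-i)‖ * ‖mt (u-i)‖
          ≤ ((q:ℝ)^i * d^i) * ((q:ℝ) * d^(u-i)) := by
            apply mul_le_mul ha hm (norm_nonneg _)
            positivity
        _ = (q:ℝ)^(i+1) * d^u := by
            have : d^i * d^(u-i) = d^u := by
              rw [← pow_add]; congr 1; omega
            rw [pow_succ, ← this]; ring
        _ ≤ (q:ℝ)^u * d^u := by
            have : (q:ℝ)^(i+1) ≤ (q:ℝ)^u :=
              pow_le_pow_right₀ (by exact_mod_cast hq) (by omega)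
            exact mul_le_mul_of_nonneg_right this (by positivity)
    have h4 : ‖mt u + ∑ i ∈ Icc 1 (u-1), a (q-i) * mt (u-i)‖
        ≤ (q:ℝ) * d^u + (u-1 : ℕ) * ((q:ℝ)^u * d^u) := by
      calc ‖mt u + ∑ i ∈ Icc 1 (u-1), a (q-i) * mt (u-i)‖
          ≤ ‖mt u‖
            + ∑ i ∈ Icc 1 (u-1), ‖a (q-i) * mt (u-i)‖ := by
            exact (norm_add_le _ _).trans
              (add_le_add_right (norm_sum_le _ _) _)
        _ ≤ (q:ℝ) * d^u + ∑ i ∈ Icc 1 (u-1), ((q:ℝ)^u * d^u) := by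
            exact add_le_add (hmt u hu1 huq) (Finset.sum_le_sum hterm)
        _ = (q:ℝ) * d^u + (u-1 : ℕ) * ((q:ℝ)^u * d^u) := by
            rw [Finset.sum_const, Nat.card_Icc]
            simp [nsmul_eq_mul]
    have h5 : (q:ℝ) * d^u + (u-1 : ℕ) * ((q:ℝ)^u * d^u) ≤ (u:ℝ) * ((q:ℝ)^u * d^u) := by
      have hqu : (q:ℝ) ≤ (q:ℝ)^u := le_self_pow₀ (by exact_mod_cast hq) (by omega)
      have hdu : (0:ℝ) ≤ d^u := by positivity
      have hcast : ((u-1:ℕ):ℝ) = (u:ℝ) - 1 := by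
        have : (1:ℕ) ≤ u := hu1
        push_cast [this]; ring
      rw [hcast]
      nlinarith [mul_le_mul_of_nonneg_right hqu hdu]
    have := h1 ▸ (h4.trans h5)
    exact le_of_mul_le_mul_left this hu0
end
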